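/- For all integers n, k with 3 ≤ k and 3 ≤ n, there exists a graph G on n vertices with exactly ⌈k(n-2)/(k-1)⌉ edges together with an edge-colouring using at most k colours that is rainbow connected. -/

import Mathlib

def RainbowConnected {V α : Type*} (G : SimpleGraph V) (c : Sym2 V → α) : Prop :=
  ∀ u v : V, ∃ p : G.Walk u v, p.IsPath ∧ (p.edges.map c).Nodup

open SimpleGraph List

namespace Flower

abbrev V (K q t : ℕ) := Option (Fin t ⊕ Fin q × Fin K)

def vv {K q t : ℕ} (j : Fin q) (i : ℕ) : V K q t :=
  if h : i < K then some (Sum.inr (j, ⟨i, h⟩)) else none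

def adjFun {K q t : ℕ} : V K q t → V K q t → Prop
  | none, some (Sum.inl _) => True
  | some (Sum.inl _), none => True
  | none, some (Sum.inr (_, p)) => p.val = 0 ∨ p.val = K - 1
  | some (Sum.inr (_, p)), none => p.val = 0 ∨ p.val = K - 1
  | some (Sum.inr (j, p)), some (Sum.inr (j', p')) =>
      j = j' ∧ (p.val + 1 = p'.val ∨ p'.val + 1 = p.val)
  | _, _ => False

def G (K q t : ℕ) : SimpleGraph (V K q t) where
  Adj := adjFun
  symm := by
    constructor
    rintro (_ | (_ | ⟨j, p⟩)) (_ | (_ | ⟨j', p'⟩)) h <;>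
      simp_all [adjFun] <;> omega
  loopless := by
    constructor
    rintro (_ | (_ | ⟨j, p⟩)) h <;> simp_all [adjFun]

def mkc {K : ℕ} (i : ℕ) : Fin (K + 1) :=
  if h : i ≤ K then ⟨i, Nat.lt_succ_of_le h⟩ else ⟨0, K.succ_pos⟩

def eF {K q t : ℕ} : Fin t ⊕ Fin q × Fin K → Fin (K + 1)
  | .inl i => mkc i.val
  | .inr (_, p) => if p.val = 0 then mkc 0 else mkc K

def F {K q t : ℕ} : V K q t → V K q t → Fin (K + 1)
  | none, none => mkc 0
  | none, some w => eF w
  | some w, none => eF w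
  | some (.inr (_, p)), some (.inr (_, p')) => mkc (min p.val p'.val + 1)
  | some _, some _ => mkc 0

lemma F_symm {K q t : ℕ} (a b : V K q t) : F a b = F b a := by
  rcases a with _ | (_ | ⟨j, p⟩) <;> rcases b with _ | (_ | ⟨j', p'⟩) <;>
    simp [F, Nat.min_comm]

def c (K q t : ℕ) : Sym2 (V K q t) → Fin (K + 1) :=
  Sym2.lift ⟨F, F_symm⟩

lemma c_mk {K q t : ℕ} (a b : V K q t) : c K q t s(a, b) = F a b := rfl

/-! ### adjacency lemmas -/

lemma adj_hub_pend {K q t : ℕ} (i : Fin t) :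
    (G K q t).Adj none (some (Sum.inl i)) := trivial

lemma adj_pend_hub {K q t : ℕ} (i : Fin t) :
    (G K q t).Adj (some (Sum.inl i)) none := trivial

lemma adj_hub_vv0 {K q t : ℕ} (j : Fin q) (h : 0 < K) :
    (G K q t).Adj none (vv j 0) := by
  show adjFun none (vv j 0)
  simp only [vv, dif_pos h]
  show (0 : ℕ) = 0 ∨ _
  left; rfl

lemma adj_step {K q t : ℕ} (j : Fin q) (a : ℕ) (h : a + 1 ≤ K) :
    (G K q t).Adj (vv j a) (vv j (a + 1)) := by
  show adjFun (vv j a) (vv j (a + 1))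
  have ha : a < K := by omega
  by_cases h2 : a + 1 < K
  · simp only [vv, dif_pos ha, dif_pos h2]
    exact ⟨rfl, Or.inl rfl⟩
  · simp only [vv, dif_pos ha, dif_neg h2]
    show a = 0 ∨ a = K - 1
    right; omega

/-! ### colour lemmas -/

lemma c_hub_pend {K q t : ℕ} (i : Fin t) :
    c K q t s(none, some (Sum.inl i)) = mkc i.val := rfl

lemma c_step {K q t : ℕ} (hK : 2 ≤ K) (j : Fin q) (a : ℕ) (h : a + 1 ≤ K) :
    c K q t s(vv j a, vv j (a + 1)) = mkc (a + 1) := by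
  have ha : a < K := by omega
  by_cases h2 : a + 1 < K
  · rw [c_mk]
    simp only [vv, dif_pos ha, dif_pos h2]
    show mkc (min a (a + 1) + 1) = _
    congr 1; omega
  · have hae : a + 1 = K := by omega
    rw [c_mk]
    simp only [vv, dif_pos ha, dif_neg h2]
    show eF (t := t) (Sum.inr (j, ⟨a, ha⟩)) = _
    simp only [eF]
    rw [if_neg (by omega), hae]

lemma c_hub0 {K q t : ℕ} (j : Fin q) (h : 0 < K) :
    c K q t s(none, vv j 0) = mkc 0 := by
  rw [c_mk]
  simp only [vv, dif_pos h]
  show eF (t := t) (Sum.inr (j, ⟨0, h⟩)) = _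
  simp [eF]

/-! ### walks -/

def ascend {K q t : ℕ} (j : Fin q) : (a d : ℕ) → a + d ≤ K →
    (G K q t).Walk (vv j a) (vv j (a + d))
  | _, 0, _ => Walk.nil
  | a, d + 1, h =>
    (Walk.cons (adj_step j a (by omega)) (ascend j (a + 1) d (by omega))).copy rfl
      (by congr 1; omega)

lemma ascend_support {K q t : ℕ} (j : Fin q) :
    ∀ (d a : ℕ) (h : a + d ≤ K),
      (ascend (t := t) j a d h).support = (range' a (d + 1)).map (vv j) := by
  intro d
  induction d with
  | zero => intro a h; rw [ascend]; rfl
  | succ d ih =>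
    intro a h
    rw [ascend]
    rw [Walk.support_copy, Walk.support_cons, ih (a + 1) (by omega), range'_succ (s := a) (n := d + 1)]
    simp

lemma ascend_colors {K q t : ℕ} (hK : 2 ≤ K) (j : Fin q) :
    ∀ (d a : ℕ) (h : a + d ≤ K),
      ((ascend (t := t) j a d h).edges.map (c K q t)) = (range' (a + 1) d).map mkc := by
  intro d
  induction d with
  | zero => intro a h; rw [ascend]; rfl
  | succ d ih =>
    intro a h
    rw [ascend]
    rw [Walk.edges_copy, Walk.edges_cons, List.map_cons, ih (a + 1) (by omega),
      c_step hK j a (by omega), range'_succ (s := a + 1) (n := d), List.map_cons]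

def hubTo {K q t : ℕ} (hK : 2 ≤ K) (j : Fin q) (b : ℕ) (hb : b ≤ K) :
    (G K q t).Walk none (vv j b) :=
  (Walk.cons (adj_hub_vv0 j (by omega)) (ascend j 0 b (by omega))).copy rfl (by congr 1; omega)

lemma hubTo_support {K q t : ℕ} (hK : 2 ≤ K) (j : Fin q) (b : ℕ) (hb : b ≤ K) :
    (hubTo (t := t) hK j b hb).support = none :: (range' 0 (b + 1)).map (vv j) := by
  rw [hubTo, Walk.support_copy, Walk.support_cons, ascend_support]

lemma hubTo_colors {K q t : ℕ} (hK : 2 ≤ K) (j : Fin q) (b : ℕ) (hb : b ≤ K) :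
    ((hubTo (t := t) hK j b hb).edges.map (c K q t)) = (range' 0 (b + 1)).map mkc := by
  rw [hubTo, Walk.edges_copy, Walk.edges_cons, List.map_cons, ascend_colors hK,
    c_hub0 j (by omega), range'_succ (s := 0) (n := b), List.map_cons]

def descendTop {K q t : ℕ} (j : Fin q) (b : ℕ) (hb : b ≤ K) :
    (G K q t).Walk (vv j b) none :=
  (ascend j b (K - b) (by omega)).copy rfl
    (by rw [show b + (K - b) = K by omega]; simp [vv])

lemma descendTop_support {K q t : ℕ} (j : Fin q) (b : ℕ) (hb : b ≤ K) :
    (descendTop (t := t) j b hb).support = (range' b (K - b + 1)).map (vv j) := by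
  rw [descendTop, Walk.support_copy, ascend_support]

lemma descendTop_colors {K q t : ℕ} (hK : 2 ≤ K) (j : Fin q) (b : ℕ) (hb : b ≤ K) :
    ((descendTop (t := t) j b hb).edges.map (c K q t)) = (range' (b + 1) (K - b)).map mkc := by
  rw [descendTop, Walk.edges_copy, ascend_colors hK]

end Flower

namespace Flower
open SimpleGraph List

/-! ### nodup helpers -/

lemma mkc_val {K i : ℕ} (h : i ≤ K) : (mkc (K := K) i).val = i := by simp [mkc, h]

lemma mem_map_mkc {K s l : ℕ} {x : Fin (K + 1)}
    (hx : x ∈ (range' s l).map (mkc (K := K))) (hsl : s + l ≤ K + 1) :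
    s ≤ x.val ∧ x.val < s + l := by
  obtain ⟨i, hi, rfl⟩ := List.mem_map.1 hx
  rw [List.mem_range'_1] at hi
  rw [mkc_val (by omega)]
  omega

lemma nodup_map_mkc {K s l : ℕ} (hsl : s + l ≤ K + 1) :
    ((range' s l).map (mkc (K := K))).Nodup := by
  refine (List.nodup_range' (s := s) (n := l)).map_on ?_
  intro x hx y hy hxy
  rw [List.mem_range'_1] at hx hy
  have := congrArg Fin.val hxy
  rwa [mkc_val (by omega), mkc_val (by omega)] at this

lemma vv_val {K q t : ℕ} (j : Fin q) (b : Fin K) :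
    vv (t := t) j b.val = some (Sum.inr (j, b)) := dif_pos b.isLt

lemma none_not_mem_map_vv {K q t : ℕ} (j : Fin q) {s l : ℕ} (h : s + l ≤ K) :
    (none : V K q t) ∉ (range' s l).map (vv j) := by
  intro hmem
  obtain ⟨i, hi, hvv⟩ := List.mem_map.1 hmem
  rw [List.mem_range'_1] at hi
  simp [vv, show i < K by omega] at hvv

lemma pend_not_mem_map_vv {K q t : ℕ} (i0 : Fin t) (j : Fin q) {s l : ℕ} :
    (some (Sum.inl i0) : V K q t) ∉ (range' s l).map (vv j) := by
  intro hmem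
  obtain ⟨i, hi, hvv⟩ := List.mem_map.1 hmem
  by_cases h : i < K <;> simp [vv, h] at hvv

lemma cyc_mem_map_vv {K q t : ℕ} {j j' : Fin q} {p : Fin K} {s l : ℕ}
    (h : (some (Sum.inr (j', p)) : V K q t) ∈ (range' s l).map (vv j)) :
    j' = j ∧ s ≤ p.val ∧ p.val < s + l := by
  obtain ⟨i, hi, hvv⟩ := List.mem_map.1 h
  rw [List.mem_range'_1] at hi
  by_cases hiK : i < K
  · rw [vv, dif_pos hiK] at hvv
    have h1 : j = j' ∧ (⟨i, hiK⟩ : Fin K) = p := by simpa using hvv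
    have h2 : p.val = i := by rw [← h1.2]
    exact ⟨h1.1.symm, by omega, by omega⟩
  · rw [vv, dif_neg hiK] at hvv
    exact absurd hvv (by simp)

lemma nodup_map_vv {K q t : ℕ} (j : Fin q) {s l : ℕ} (hsl : s + l ≤ K + 1) :
    ((range' s l).map (vv (K := K) (q := q) (t := t) j)).Nodup := by
  refine (List.nodup_range' (s := s) (n := l)).map_on ?_
  intro x hx y hy hxy
  rw [List.mem_range'_1] at hx hy
  by_cases h1 : x < K <;> by_cases h2 : y < K
  · rw [vv, dif_pos h1, vv, dif_pos h2] at hxy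
    simpa using hxy
  · rw [vv, dif_pos h1, vv, dif_neg h2] at hxy; exact absurd hxy (by simp)
  · rw [vv, dif_neg h1, vv, dif_pos h2] at hxy; exact absurd hxy (by simp)
  · omega

/-! ### existence of rainbow paths between each pair -/

def Good (K q t : ℕ) (u v : V K q t) : Prop :=
  ∃ p : (G K q t).Walk u v, p.IsPath ∧ ((p.edges).map (c K q t)).Nodup

lemma Good.symm' {K q t : ℕ} {u v : V K q t} (h : Good K q t u v) : Good K q t v u := by
  obtain ⟨p, hp, hc⟩ := h
  exact ⟨p.reverse, hp.reverse, by
    rw [Walk.edges_reverse, List.map_reverse]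
    exact List.nodup_reverse.2 hc⟩

lemma good_refl {K q t : ℕ} (u : V K q t) : Good K q t u u :=
  ⟨Walk.nil, Walk.IsPath.nil, by simp⟩

lemma good_hub_pend {K q t : ℕ} (i : Fin t) : Good K q t none (some (Sum.inl i)) :=
  ⟨Walk.cons (adj_hub_pend i) Walk.nil, by simp [Walk.isPath_def], by simp⟩

lemma good_hub_cyc {K q t : ℕ} (hK : 2 ≤ K) (j : Fin q) (b : Fin K) :
    Good K q t none (some (Sum.inr (j, b))) := by
  refine ⟨(hubTo hK j b.val (le_of_lt b.isLt)).copy rfl (vv_val j b), ?_, ?_⟩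
  · rw [Walk.isPath_def, Walk.support_copy, hubTo_support, List.nodup_cons]
    exact ⟨none_not_mem_map_vv j (by omega), nodup_map_vv j (by omega)⟩
  · rw [Walk.edges_copy, hubTo_colors]
    exact nodup_map_mkc (by omega)

lemma good_pend_pend {K q t : ℕ} (ht : t ≤ K + 1) (i i' : Fin t) (hne : i ≠ i') :
    Good K q t (some (Sum.inl i)) (some (Sum.inl i')) := by
  refine ⟨Walk.cons (adj_pend_hub i) (Walk.cons (adj_hub_pend i') Walk.nil), ?_, ?_⟩
  · rw [Walk.isPath_def]
    simp [hne]
  · simp only [Walk.edges_cons, Walk.edges_nil, List.map_cons, List.map_nil]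
    have h1 : c K q t s(some (Sum.inl i), none) = mkc i.val := rfl
    have h2 : c K q t s(none, some (Sum.inl i')) = mkc i'.val := rfl
    rw [h1, h2]
    simp only [List.nodup_cons, List.mem_singleton, List.not_mem_nil, not_false_iff,
      List.nodup_nil, and_true, List.mem_cons]
    intro hcontra
    rcases hcontra with hcontra | hcontra
    · have := congrArg Fin.val hcontra
      rw [mkc_val (by omega), mkc_val (by omega)] at this
      exact hne (Fin.val_injective this)
    · simp at hcontra

lemma good_pend_cyc {K q t : ℕ} (hK : 2 ≤ K) (ht : t ≤ K + 1) (i : Fin t) (j : Fin q)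
    (b : Fin K) : Good K q t (some (Sum.inl i)) (some (Sum.inr (j, b))) := by
  by_cases hcase : b.val < i.val
  · refine ⟨Walk.cons (adj_pend_hub i) ((hubTo hK j b.val (le_of_lt b.isLt)).copy rfl
      (vv_val j b)), ?_, ?_⟩
    · rw [Walk.isPath_def, Walk.support_cons, Walk.support_copy, hubTo_support,
        List.nodup_cons, List.nodup_cons]
      refine ⟨?_, none_not_mem_map_vv j (by omega), nodup_map_vv j (by omega)⟩
      intro hmem
      rcases List.mem_cons.1 hmem with h | hmem
      · exact absurd h (by simp)
      · exact pend_not_mem_map_vv i j hmem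
    · rw [Walk.edges_cons, List.map_cons, Walk.edges_copy, hubTo_colors, List.nodup_cons]
      have h1 : c K q t s(some (Sum.inl i), none) = mkc i.val := rfl
      rw [h1]
      refine ⟨?_, nodup_map_mkc (by omega)⟩
      intro hmem
      have := mem_map_mkc hmem (by omega)
      rw [mkc_val (by omega)] at this
      omega
  · refine ⟨Walk.cons (adj_pend_hub i) (((descendTop j b.val (le_of_lt b.isLt)).reverse).copy
      rfl (vv_val j b)), ?_, ?_⟩
    · rw [Walk.isPath_def, Walk.support_cons, Walk.support_copy, Walk.support_reverse,
        descendTop_support, List.nodup_cons]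
      refine ⟨?_, List.nodup_reverse.2 (nodup_map_vv j (by omega))⟩
      intro hmem
      rw [List.mem_reverse] at hmem
      exact pend_not_mem_map_vv i j hmem
    · rw [Walk.edges_cons, List.map_cons, Walk.edges_copy, Walk.edges_reverse,
        List.map_reverse, descendTop_colors hK, List.nodup_cons]
      have h1 : c K q t s(some (Sum.inl i), none) = mkc i.val := rfl
      rw [h1]
      refine ⟨?_, List.nodup_reverse.2 (nodup_map_mkc (by omega))⟩
      intro hmem
      rw [List.mem_reverse] at hmem
      have := mem_map_mkc hmem (by omega)
      rw [mkc_val (by omega)] at this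
      omega

lemma good_cyc_same {K q t : ℕ} (hK : 2 ≤ K) (j : Fin q) (a b : Fin K)
    (hab : a.val < b.val) :
    Good K q t (some (Sum.inr (j, a))) (some (Sum.inr (j, b))) := by
  refine ⟨(ascend j a.val (b.val - a.val) (by omega)).copy (vv_val j a)
    (by rw [show a.val + (b.val - a.val) = b.val by omega]; exact vv_val j b), ?_, ?_⟩
  · rw [Walk.isPath_def, Walk.support_copy, ascend_support]
    exact nodup_map_vv j (by omega)
  · rw [Walk.edges_copy, ascend_colors hK]
    exact nodup_map_mkc (by omega)

lemma good_cyc_diff {K q t : ℕ} (hK : 2 ≤ K) {j j' : Fin q} (hj : j ≠ j') (a b : Fin K)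
    (hab : a.val ≤ b.val) :
    Good K q t (some (Sum.inr (j, a))) (some (Sum.inr (j', b))) := by
  refine ⟨(((hubTo hK j a.val (le_of_lt a.isLt)).reverse).copy (vv_val j a) rfl).append
    (((descendTop j' b.val (le_of_lt b.isLt)).reverse).copy rfl (vv_val j' b)), ?_, ?_⟩
  · rw [Walk.isPath_def, Walk.support_append, Walk.support_copy, Walk.support_copy,
      Walk.support_reverse, Walk.support_reverse, hubTo_support, descendTop_support]
    have hconc : range' b.val (K - b.val + 1) = range' b.val (K - b.val) ++ [K] := by
      rw [List.range'_1_concat]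
      congr 2
      omega
    have hnone : vv (K := K) (q := q) (t := t) j' K = none := dif_neg (by omega)
    rw [hconc, List.map_append, List.reverse_append]
    simp only [List.map_cons, List.map_nil, hnone, List.reverse_cons, List.reverse_nil,
      List.nil_append, List.singleton_append, List.tail_cons]
    apply List.Nodup.append
    · apply List.Nodup.append
      · exact List.nodup_reverse.2 (nodup_map_vv j (by omega))
      · exact List.nodup_singleton none
      · intro x hx hy
        rw [List.mem_reverse] at hx
        rw [List.mem_singleton] at hy
        subst hy
        exact none_not_mem_map_vv j (by omega) hx
    · exact List.nodup_reverse.2 (nodup_map_vv j' (by omega))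
    · intro x hx hy
      rw [List.mem_reverse] at hy
      rcases List.mem_append.1 hx with hx | hx
      · rw [List.mem_reverse] at hx
        rcases x with _ | (i | ⟨jx, px⟩)
        · exact none_not_mem_map_vv j (by omega) hx
        · exact pend_not_mem_map_vv i j hx
        · have h1 := cyc_mem_map_vv hx
          have h2 := cyc_mem_map_vv hy
          exact hj (h1.1 ▸ h2.1.symm ▸ rfl)
      · rw [List.mem_singleton] at hx
        subst hx
        exact none_not_mem_map_vv j' (by omega) hy
  · rw [Walk.edges_append, List.map_append, Walk.edges_copy, Walk.edges_copy,
      Walk.edges_reverse, Walk.edges_reverse, List.map_reverse, List.map_reverse,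
      hubTo_colors, descendTop_colors hK]
    apply List.Nodup.append
    · exact List.nodup_reverse.2 (nodup_map_mkc (by omega))
    · exact List.nodup_reverse.2 (nodup_map_mkc (by omega))
    · intro x hx hy
      rw [List.mem_reverse] at hx hy
      have h1 := mem_map_mkc hx (by omega)
      have h2 := mem_map_mkc hy (by omega)
      omega

theorem rainbow {K q t : ℕ} (hK : 2 ≤ K) (ht : t ≤ K + 1) :
    ∀ u v : V K q t, Good K q t u v := by
  intro u v
  rcases u with _ | (i | ⟨j, a⟩) <;> rcases v with _ | (i' | ⟨j', b⟩)
  · exact good_refl _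
  · exact good_hub_pend i'
  · exact good_hub_cyc hK j' b
  · exact (good_hub_pend i).symm'
  · rcases eq_or_ne i i' with rfl | hne
    · exact good_refl _
    · exact good_pend_pend ht i i' hne
  · exact good_pend_cyc hK ht i j' b
  · exact (good_hub_cyc hK j a).symm'
  · exact (good_pend_cyc hK ht i' j a).symm'
  · rcases eq_or_ne j j' with rfl | hj
    · rcases Nat.lt_trichotomy a.val b.val with h | h | h
      · exact good_cyc_same hK j a b h
      · have : a = b := Fin.val_injective h
        subst this
        exact good_refl _
      · exact (good_cyc_same hK j b a h).symm'
    · rcases le_or_gt a.val b.val with h | h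
      · exact good_cyc_diff hK hj a b h
      · exact (good_cyc_diff hK hj.symm b a (by omega)).symm'

/-! ### edge counting -/

def ww {K q t : ℕ} (j : Fin q) (i : ℕ) : V K q t :=
  if i = 0 then none else vv j (i - 1)

lemma ww_zero {K q t : ℕ} (j : Fin q) : ww (K := K) (t := t) j 0 = none := rfl

lemma ww_succ_lt {K q t : ℕ} (j : Fin q) {i : ℕ} (h : i < K) :
    ww (t := t) j (i + 1) = some (Sum.inr (j, ⟨i, h⟩)) := by
  simp [ww, vv, h]

lemma ww_succ_ge {K q t : ℕ} (j : Fin q) {i : ℕ} (h : K ≤ i) :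
    ww (K := K) (t := t) j (i + 1) = none := by
  simp [ww, vv, show ¬ i < K from not_lt.2 h]

def edg {K q t : ℕ} : Fin t ⊕ Fin q × Fin (K + 1) → Sym2 (V K q t)
  | .inl i => s(none, some (.inl i))
  | .inr (j, c) => s(ww j c.val, ww j (c.val + 1))

lemma edg_mem {K q t : ℕ} (hK : 2 ≤ K) (x : Fin t ⊕ Fin q × Fin (K + 1)) :
    edg x ∈ (G K q t).edgeSet := by
  rcases x with i | ⟨j, c⟩
  · exact adj_hub_pend (K := K) (q := q) i
  · show s(ww j c.val, ww j (c.val + 1)) ∈ _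
    rcases hc : c.val with _ | i
    · rw [ww_zero]
      have h0 : 0 < K := by omega
      have : ww (K := K) (q := q) (t := t) j 1 = vv j 0 := by
        rw [show (1 : ℕ) = 0 + 1 by rfl, ww_succ_lt j h0, vv, dif_pos h0]
      rw [this]
      exact adj_hub_vv0 j h0
    · have hiK : i < K := by have := c.isLt; omega
      have h1 : ww (K := K) (q := q) (t := t) j (i + 1) = vv j i := by
        rw [ww_succ_lt j hiK, vv, dif_pos hiK]
      have h2 : ww (K := K) (q := q) (t := t) j (i + 1 + 1) = vv j (i + 1) := by
        by_cases h : i + 1 < K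
        · rw [ww_succ_lt j h, vv, dif_pos h]
        · rw [ww_succ_ge j (by omega), vv, dif_neg h]
      rw [h1, h2]
      exact adj_step j i (by omega)

lemma ww_ne_pend {K q t : ℕ} (j : Fin q) (m : ℕ) (i : Fin t) :
    ww (K := K) j m ≠ some (Sum.inl i) := by
  rcases m with _ | m
  · simp [ww_zero]
  · by_cases h : m < K
    · rw [ww_succ_lt j h]; simp
    · rw [ww_succ_ge j (by omega)]; simp

lemma edg_inj {K q t : ℕ} (hK : 2 ≤ K) :
    Function.Injective (edg (K := K) (q := q) (t := t)) := by
  have wwn : ∀ (j : Fin q) (i : ℕ), i ≤ K + 1 →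
      (ww (K := K) (t := t) j i = none ↔ (i = 0 ∨ i = K + 1)) := by
    intro j i hi
    rcases i with _ | i
    · simp [ww_zero]
    · by_cases h : i < K
      · rw [ww_succ_lt j h]; simp; omega
      · rw [ww_succ_ge j (by omega)]; simp; omega
  have wws : ∀ (j j' : Fin q) (i i' : ℕ), i < K → i' < K →
      ww (K := K) (t := t) j (i + 1) = ww (t := t) j' (i' + 1) → j = j' ∧ i = i' := by
    intro j j' i i' h h' heq
    rw [ww_succ_lt j h, ww_succ_lt j' h'] at heq
    have h2 : j = j' ∧ (⟨i, h⟩ : Fin K) = ⟨i', h'⟩ := by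
      simpa using Option.some.inj heq
    exact ⟨h2.1, by have := congrArg Fin.val h2.2; simpa using this⟩
  -- general ww equality inversion
  have wweq : ∀ (j j' : Fin q) (i i' : ℕ), i ≤ K + 1 → i' ≤ K + 1 →
      ww (K := K) (t := t) j i = ww (t := t) j' i' →
      ((i = 0 ∨ i = K + 1) ∧ (i' = 0 ∨ i' = K + 1)) ∨ (j = j' ∧ i = i' ∧ 1 ≤ i ∧ i ≤ K) := by
    intro j j' i i' hi hi' heq
    rcases i with _ | m <;> rcases i' with _ | m'
    · left; exact ⟨Or.inl rfl, Or.inl rfl⟩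
    · left
      refine ⟨Or.inl rfl, ?_⟩
      rw [ww_zero] at heq
      have := (wwn j' (m' + 1) hi').1 heq.symm
      omega
    · left
      refine ⟨?_, Or.inl rfl⟩
      rw [ww_zero] at heq
      have := (wwn j (m + 1) hi).1 heq
      omega
    · by_cases h : m < K <;> by_cases h' : m' < K
      · obtain ⟨hj, hm⟩ := wws j j' m m' h h' heq
        right; exact ⟨hj, by omega, by omega, by omega⟩
      · rw [ww_succ_ge j' (by omega)] at heq
        have := (wwn j (m + 1) hi).1 heq
        left; constructor <;> omega
      · rw [ww_succ_ge j (by omega)] at heq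
        have := (wwn j' (m' + 1) hi').1 heq.symm
        left; constructor <;> omega
      · left; constructor <;> omega
  intro x y hxy
  rcases x with i | ⟨j, cx⟩ <;> rcases y with i' | ⟨j', cy⟩
  · simp only [edg] at hxy
    rcases Sym2.eq_iff.1 hxy with ⟨_, h2⟩ | ⟨h1, _⟩
    · simp_all
    · simp_all
  · exfalso
    simp only [edg] at hxy
    rcases Sym2.eq_iff.1 hxy with ⟨h1, h2⟩ | ⟨h1, h2⟩
    · exact ww_ne_pend j' _ i h2.symm
    · exact ww_ne_pend j' _ i h2.symm
  · exfalso
    simp only [edg] at hxy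
    rcases Sym2.eq_iff.1 hxy with ⟨h1, h2⟩ | ⟨h1, h2⟩
    · exact ww_ne_pend j _ i' h2
    · exact ww_ne_pend j _ i' h1
  · simp only [edg] at hxy
    have hcx := cx.isLt
    have hcy := cy.isLt
    rcases Sym2.eq_iff.1 hxy with ⟨h1, h2⟩ | ⟨h1, h2⟩
    · rcases wweq j j' cx.val cy.val (by omega) (by omega) h1 with ⟨ha, hb⟩ | ⟨hj, hv, _, _⟩
      · -- cx.val, cy.val ∈ {0, K+1} ∩ [0,K] = {0}
        have hx0 : cx.val = 0 := by omega
        have hy0 : cy.val = 0 := by omega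
        rcases wweq j j' (cx.val + 1) (cy.val + 1) (by omega) (by omega) h2 with
          ⟨ha2, hb2⟩ | ⟨hj, hv, _, _⟩
        · omega
        · have : cx = cy := Fin.val_injective (by omega)
          subst this
          subst hj
          rfl
      · have : cx = cy := Fin.val_injective hv
        subst this
        subst hj
        rfl
    · -- crossed: ww j cx = ww j' (cy+1) and ww j (cx+1) = ww j' cy
      rcases wweq j j' cx.val (cy.val + 1) (by omega) (by omega) h1 with ⟨ha, hb⟩ | ⟨hj, hv, _, _⟩
      · -- cx = 0 and cy = K
        have hx0 : cx.val = 0 := by omega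
        have hyK : cy.val = K := by omega
        rw [hx0, hyK] at h2
        rcases wweq j j' (0 + 1) K (by omega) (by omega) h2 with ⟨ha2, hb2⟩ | ⟨hj, hv, _, _⟩
        · omega
        · omega
      · -- cx = cy + 1, then second equation gives contradiction
        rcases wweq j j' (cx.val + 1) cy.val (by omega) (by omega) h2 with ⟨ha2, hb2⟩ | ⟨hj2, hv2, _, _⟩
        · omega
        · omega

lemma edg_inr_val {K q t : ℕ} (j : Fin q) (m : ℕ) (hm : m < K + 1) :
    edg (K := K) (q := q) (t := t) (Sum.inr (j, ⟨m, hm⟩)) = s(ww j m, ww j (m + 1)) := rfl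

lemma ww_K {K q t : ℕ} (hK : 1 ≤ K) (j : Fin q) :
    ww (K := K) (t := t) j K = some (Sum.inr (j, ⟨K - 1, by omega⟩)) := by
  rw [ww, if_neg (by omega), vv, dif_pos (show K - 1 < K by omega)]

lemma edg_surj {K q t : ℕ} (hK : 2 ≤ K) (e : Sym2 (V K q t)) (he : e ∈ (G K q t).edgeSet) :
    ∃ x, edg x = e := by
  have h0K : 0 < K := by omega
  induction e using Sym2.ind with
  | _ u v =>
    have hadj : adjFun u v := he
    clear he
    rcases u with _ | (i | ⟨j, p⟩) <;> rcases v with _ | (i' | ⟨j', p'⟩)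
    · exact absurd hadj (by simp [adjFun])
    · exact ⟨Sum.inl i', rfl⟩
    · -- hub to cycle vertex : p' = 0 or p' = K - 1
      rcases hadj with h0 | hK1
      · have hp' : p' = ⟨0, h0K⟩ := Fin.val_injective h0
        subst hp'
        refine ⟨Sum.inr (j', ⟨0, by omega⟩), ?_⟩
        rw [edg_inr_val j' 0 (by omega), ww_zero, show (0 : ℕ) + 1 = 0 + 1 from rfl,
          ww_succ_lt j' h0K]
      · have hKK : K - 1 < K := by omega
        have hp' : p' = ⟨K - 1, hKK⟩ := Fin.val_injective hK1
        subst hp'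
        refine ⟨Sum.inr (j', ⟨K, by omega⟩), ?_⟩
        rw [edg_inr_val j' K (by omega), ww_K (by omega) j', ww_succ_ge j' (by omega),
          Sym2.eq_swap]
    · exact ⟨Sum.inl i, Sym2.eq_swap⟩
    · exact absurd hadj (by simp [adjFun])
    · exact absurd hadj (by simp [adjFun])
    · -- cycle vertex to hub
      rcases hadj with h0 | hK1
      · have hp : p = ⟨0, h0K⟩ := Fin.val_injective h0
        subst hp
        refine ⟨Sum.inr (j, ⟨0, by omega⟩), ?_⟩
        rw [edg_inr_val j 0 (by omega), ww_zero, show (0 : ℕ) + 1 = 0 + 1 from rfl,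
          ww_succ_lt j h0K, Sym2.eq_swap]
      · have hKK : K - 1 < K := by omega
        have hp : p = ⟨K - 1, hKK⟩ := Fin.val_injective hK1
        subst hp
        refine ⟨Sum.inr (j, ⟨K, by omega⟩), ?_⟩
        rw [edg_inr_val j K (by omega), ww_K (by omega) j, ww_succ_ge j (by omega)]
    · exact absurd hadj (by simp [adjFun])
    · obtain ⟨hj, hval⟩ := hadj
      subst hj
      rcases hval with hup | hdown
      · have hlt : p.val + 1 < K := by have := p'.isLt; omega
        have hp' : p' = ⟨p.val + 1, hlt⟩ := Fin.val_injective hup.symm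
        subst hp'
        refine ⟨Sum.inr (j, ⟨p.val + 1, by omega⟩), ?_⟩
        rw [edg_inr_val j (p.val + 1) (by omega), ww_succ_lt j p.isLt, ww_succ_lt j hlt]
      · have hlt : p'.val + 1 < K := by have := p.isLt; omega
        have hp : p = ⟨p'.val + 1, hlt⟩ := Fin.val_injective hdown.symm
        subst hp
        refine ⟨Sum.inr (j, ⟨p'.val + 1, by omega⟩), ?_⟩
        rw [edg_inr_val j (p'.val + 1) (by omega), ww_succ_lt j p'.isLt, ww_succ_lt j hlt,
          Sym2.eq_swap]

lemma card_edgeSet {K q t : ℕ} (hK : 2 ≤ K) :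
    Nat.card (G K q t).edgeSet = t + q * (K + 1) := by
  have hb : Function.Bijective
      (fun x : Fin t ⊕ Fin q × Fin (K + 1) => (⟨edg x, edg_mem hK x⟩ : (G K q t).edgeSet)) := by
    constructor
    · intro x y hxy
      exact edg_inj hK (congrArg Subtype.val hxy)
    · rintro ⟨e, he⟩
      obtain ⟨x, hx⟩ := edg_surj hK e he
      exact ⟨x, Subtype.ext hx⟩
  rw [← Nat.card_eq_of_bijective _ hb, Nat.card_eq_fintype_card]
  simp [Fintype.card_sum, Fintype.card_prod]

end Flower


theorem stmt_7 (n k : ℕ) (hk : 3 ≤ k) (hn : 3 ≤ n) :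
    ∃ G : SimpleGraph (Fin n),
      (Nat.card G.edgeSet : ℤ) = ⌈(k : ℚ) * (n - 2) / (k - 1)⌉ ∧
      ∃ c : Sym2 (Fin n) → Fin k, RainbowConnected G c := by
  obtain ⟨K, rfl⟩ : ∃ K, k = K + 1 := ⟨k - 1, by omega⟩
  have hK : 2 ≤ K := by omega
  set q := (n - 3) / K with hq_def
  set s := (n - 3) % K with hs_def
  set t := n - 1 - q * K with ht_def
  have hdm : K * q + s = n - 3 := Nat.div_add_mod (n - 3) K
  have hcomm : q * K = K * q := Nat.mul_comm q K
  have hsK : s < K := Nat.mod_lt _ (by omega)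
  have hneq : n = q * K + s + 3 := by omega
  have ht : t = s + 2 := by omega
  have ht1 : t ≤ K + 1 := by omega
  have hcard : Fintype.card (Flower.V K q t) = n := by
    simp only [Flower.V, Fintype.card_option, Fintype.card_sum, Fintype.card_prod,
      Fintype.card_fin]
    omega
  let e : Flower.V K q t ≃ Fin n := (Fintype.equivFin _).trans (finCongr hcard)
  refine ⟨(Flower.G K q t).map e.toEmbedding, ?_, ?_⟩
  · have h1 : Nat.card ((Flower.G K q t).map e.toEmbedding).edgeSet = t + q * (K + 1) := by
      erw [← Nat.card_congr (SimpleGraph.Iso.mapEdgeSet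
        (SimpleGraph.Iso.map e (Flower.G K q t)))]
      exact Flower.card_edgeSet hK
    rw [h1]
    symm
    rw [Int.ceil_eq_iff]
    have hKQ : (0 : ℚ) < K := by exact_mod_cast (by omega : 0 < K)
    have hnQ : (n : ℚ) = q * K + s + 3 := by exact_mod_cast congrArg (Nat.cast (R := ℚ)) hneq
    have hzQ : ((t + q * (K + 1) : ℕ) : ℤ) = (t : ℤ) + q * (K + 1) := by push_cast; ring
    have hsQ : (s : ℚ) + 1 ≤ K := by exact_mod_cast hsK
    have hden : ((K + 1 : ℕ) : ℚ) - 1 = (K : ℚ) := by push_cast; ring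
    constructor
    · rw [hden, lt_div_iff₀ hKQ]
      push_cast [ht, hnQ]
      nlinarith [hKQ]
    · rw [hden, div_le_iff₀ hKQ]
      push_cast [ht, hnQ]
      nlinarith [hKQ, hsQ]
  · refine ⟨fun x => Flower.c K q t (Sym2.map e.symm x), ?_⟩
    intro u v
    obtain ⟨p, hp, hc⟩ := Flower.rainbow hK ht1 (e.symm u) (e.symm v)
    let hom : Flower.G K q t →g (Flower.G K q t).map e.toEmbedding :=
      (SimpleGraph.Iso.map e (Flower.G K q t)).toEmbedding.toHom
    have homco : ∀ x, hom x = e x := fun _ => rfl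
    refine ⟨(p.map hom).copy (by rw [homco, Equiv.apply_symm_apply])
      (by rw [homco, Equiv.apply_symm_apply]), ?_, ?_⟩
    · rw [SimpleGraph.Walk.isPath_copy]
      exact SimpleGraph.Walk.map_isPath_of_injective
        (by intro a b hab; exact e.injective (by rw [← homco, ← homco, hab])) hp
    · rw [SimpleGraph.Walk.edges_copy, SimpleGraph.Walk.edges_map, List.map_map]
      have hcomp : (fun x => Flower.c K q t (Sym2.map e.symm x)) ∘ Sym2.map ⇑hom
          = Flower.c K q t := by
        funext z
        simp only [Function.comp_apply]
        congr 1
        have : ⇑hom = ⇑e := funext homco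
        rw [this, Sym2.map_map]
        simp
      rw [hcomp]
      exact hc
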